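/- Let 1 < p, q < ∞ with 1/p + 1/q ≥ 1. Let X and Y be Banach spaces with unconditional Schauder decompositions {X_i}_{i∈I} and {Y_j}_{j∈J} having a disjoint lower p-estimate and a disjoint lower q-estimate, respectively, with associated projections P_C (C ⊆ I), Q_D (D ⊆ J) satisfying ‖P_C‖ ≤ 1 and ‖Q_D‖ ≤ 1 for all nonempty C, D, and let R_{C,D} := P_C ⊗ Q_D on X ⊗π Y. Then there is a constant d > 0 such that, for all sequences (A_n)_{n∈ℕ} and (B_n)_{n∈ℕ} of pairwise disjoint finite subsets of I and J respectively, Σ_{n∈ℕ} ‖R_{A_n,B_n}(z)‖_{X⊗πY} ≤ d‖z‖_{X⊗πY} for every z ∈ X ⊗π Y. -/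

import Mathlib

open Filter Topology Pointwise MeasureTheory
open scoped ENNReal

/-- A set is weakly compact if its image in the weak space is compact. -/
def WeaklyCompact {Z : Type*} [NormedAddCommGroup Z] [NormedSpace ℝ Z] (K : Set Z) : Prop :=
  IsCompact (toWeakSpace ℝ Z '' K)

/-- A set is relatively weakly compact if the weak closure of its image in the weak space
is compact. -/
def RelWeaklyCompact {Z : Type*} [NormedAddCommGroup Z] [NormedSpace ℝ Z] (K : Set Z) : Prop :=
  IsCompact (closure (toWeakSpace ℝ Z '' K))

/-- A set is conditionally weakly compact (weakly precompact) if every sequence in it has a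
weakly Cauchy subsequence. -/
def CondWeaklyCompact {Z : Type*} [NormedAddCommGroup Z] [NormedSpace ℝ Z] (D : Set Z) : Prop :=
  ∀ u : ℕ → Z, (∀ n, u n ∈ D) → ∃ φ : ℕ → ℕ, StrictMono φ ∧
    ∀ f : Z →L[ℝ] ℝ, ∃ l : ℝ, Tendsto (fun n => f (u (φ n))) atTop (nhds l)

/-- `Z` is strongly weakly compactly generated by the weakly compact set `G`. -/
def SWCGBy {Z : Type*} [NormedAddCommGroup Z] [NormedSpace ℝ Z] (G : Set Z) : Prop :=
  WeaklyCompact G ∧ ∀ K : Set Z, WeaklyCompact K → ∀ ε : ℝ, 0 < ε →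
    ∃ n : ℕ, K ⊆ (n : ℝ) • G + Metric.closedBall (0 : Z) ε

/-- A Banach space is strongly weakly compactly generated. -/
def IsSWCG (Z : Type*) [NormedAddCommGroup Z] [NormedSpace ℝ Z] : Prop :=
  ∃ G : Set Z, SWCGBy G

/-- A Banach space is strongly conditionally weakly compactly generated. -/
def IsSCWCG (Z : Type*) [NormedAddCommGroup Z] [NormedSpace ℝ Z] : Prop :=
  ∃ G : Set Z, CondWeaklyCompact G ∧ ∀ C : Set Z, CondWeaklyCompact C → ∀ ε : ℝ, 0 < ε →
    ∃ n : ℕ, C ⊆ (n : ℝ) • G + Metric.closedBall (0 : Z) ε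

/-- A Banach space is weakly sequentially complete if every weakly Cauchy sequence is weakly
convergent. -/
def WeaklySeqComplete (Z : Type*) [NormedAddCommGroup Z] [NormedSpace ℝ Z] : Prop :=
  ∀ u : ℕ → Z, (∀ f : Z →L[ℝ] ℝ, ∃ l : ℝ, Tendsto (fun n => f (u n)) atTop (nhds l)) →
    ∃ z : Z, ∀ f : Z →L[ℝ] ℝ, Tendsto (fun n => f (u n)) atTop (nhds (f z))

/-- A Banach space has the Schur property if weakly convergent sequences are norm convergent. -/
def SchurProperty (Z : Type*) [NormedAddCommGroup Z] [NormedSpace ℝ Z] : Prop :=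
  ∀ u : ℕ → Z, ∀ z : Z,
    (∀ f : Z →L[ℝ] ℝ, Tendsto (fun n => f (u n)) atTop (nhds (f z))) →
      Tendsto u atTop (nhds z)

/-- `Z`, together with the continuous bilinear map `t`, is (a realization of) the projective
tensor product `X ⊗π Y`: the elementary tensors span a dense subspace, on that subspace the
norm is the projective norm, and every bilinear functional of norm at most one induces a
functional on `Z` of norm at most one. -/
def IsProjTensorProduct {X Y Z : Type*} [NormedAddCommGroup X] [NormedSpace ℝ X]
    [NormedAddCommGroup Y] [NormedSpace ℝ Y] [NormedAddCommGroup Z] [NormedSpace ℝ Z]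
    (t : X →L[ℝ] Y →L[ℝ] Z) : Prop :=
  Dense ((Submodule.span ℝ {z : Z | ∃ x y, z = t x y} : Submodule ℝ Z) : Set Z) ∧
  (∀ z : Z, z ∈ Submodule.span ℝ {z : Z | ∃ x y, z = t x y} →
    ‖z‖ = sInf {r : ℝ | ∃ (n : ℕ) (x : Fin n → X) (y : Fin n → Y),
      z = ∑ i, t (x i) (y i) ∧ r = ∑ i, ‖x i‖ * ‖y i‖}) ∧
  (∀ B : X →L[ℝ] Y →L[ℝ] ℝ, ‖B‖ ≤ 1 →
    ∃ φ : Z →L[ℝ] ℝ, ‖φ‖ ≤ 1 ∧ ∀ x y, φ (t x y) = B x y)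

/-- An unconditional Schauder decomposition of `X` indexed by `I`, given by its family of
projections `proj C` for `C ⊆ I`: each `proj C x` is the unconditional sum of the coordinate
projections `proj {i} x`, `i ∈ C`, the coordinate projections are pairwise disjoint idempotents
and they sum to the identity. -/
structure SchauderDecomp (I : Type*) (X : Type*) [NormedAddCommGroup X]
    [NormedSpace ℝ X] where
  proj : Set I → (X →L[ℝ] X)
  hasSum_proj : ∀ (C : Set I) (x : X), HasSum (fun i : C => proj {(i : I)} x) (proj C x)
  proj_univ : ∀ x, proj Set.univ x = x
  proj_idem : ∀ i : I, ∀ x, proj {i} (proj {i} x) = proj {i} x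
  proj_disjoint : ∀ i j : I, i ≠ j → ∀ x, proj {i} (proj {j} x) = 0

/-- The decomposition is finite dimensional if each coordinate subspace is finite dimensional. -/
def SchauderDecomp.FinDim {I X : Type*} [NormedAddCommGroup X] [NormedSpace ℝ X]
    (d : SchauderDecomp I X) : Prop :=
  ∀ i : I, FiniteDimensional ℝ (LinearMap.range ((d.proj {i}) : X →ₗ[ℝ] X))

/-- The decomposition has a disjoint lower `p`-estimate. -/
def SchauderDecomp.DisjLowerEstimate {I X : Type*} [NormedAddCommGroup X] [NormedSpace ℝ X]
    (d : SchauderDecomp I X) (p : ℝ) : Prop :=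
  ∃ c : ℝ, 0 < c ∧ ∀ (r : ℕ) (C : Fin r → Set I), (∀ k, (C k).Finite) →
    (Pairwise fun k l => Disjoint (C k) (C l)) →
    ∀ x : X, (∑ k, ‖d.proj (C k) x‖ ^ p) ^ (1 / p) ≤ c * ‖x‖


section AuxHolder

private lemma aux_add_rpow {x y t : ℝ} (hx : 0 ≤ x) (hy : 0 ≤ y) (ht : 1 ≤ t) :
    x ^ t + y ^ t ≤ (x + y) ^ t := by
  lift x to NNReal using hx
  lift y to NNReal using hy
  have := NNReal.add_rpow_le_rpow_add x y ht
  have h2 : ((x ^ t + y ^ t : NNReal) : ℝ) ≤ (((x + y) ^ t : NNReal) : ℝ) := by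
    exact_mod_cast this
  push_cast at h2
  convert h2 using 2

private lemma aux_sum_rpow_le {ι : Type*} (s : Finset ι) (f : ι → ℝ) (hf : ∀ i, 0 ≤ f i)
    {t : ℝ} (ht : 1 ≤ t) : ∑ i ∈ s, f i ^ t ≤ (∑ i ∈ s, f i) ^ t := by
  induction s using Finset.cons_induction with
  | empty => simp [Real.zero_rpow (by positivity : t ≠ 0)]
  | cons a s ha ih =>
    rw [Finset.sum_cons, Finset.sum_cons]
    calc f a ^ t + ∑ i ∈ s, f i ^ t ≤ f a ^ t + (∑ i ∈ s, f i) ^ t := by linarith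
    _ ≤ (f a + ∑ i ∈ s, f i) ^ t :=
        aux_add_rpow (hf a) (Finset.sum_nonneg fun i _ => hf i) ht

private lemma aux_lp_mono {ι : Type*} (s : Finset ι) (f : ι → ℝ) (hf : ∀ i, 0 ≤ f i)
    {u v : ℝ} (hu : 0 < u) (huv : u ≤ v) :
    (∑ i ∈ s, f i ^ v) ^ (1 / v) ≤ (∑ i ∈ s, f i ^ u) ^ (1 / u) := by
  have hv : 0 < v := lt_of_lt_of_le hu huv
  have h1 : ∑ i ∈ s, f i ^ v ≤ (∑ i ∈ s, f i ^ u) ^ (v / u) := by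
    have : ∀ i ∈ s, f i ^ v = (f i ^ u) ^ (v / u) := by
      intro i _
      rw [← Real.rpow_mul (hf i), mul_div_cancel₀ _ hu.ne']
    rw [Finset.sum_congr rfl this]
    exact aux_sum_rpow_le s (fun i => f i ^ u) (fun i => Real.rpow_nonneg (hf i) u)
      ((one_le_div hu).2 huv)
  calc (∑ i ∈ s, f i ^ v) ^ (1 / v)
      ≤ ((∑ i ∈ s, f i ^ u) ^ (v / u)) ^ (1 / v) :=
        Real.rpow_le_rpow (Finset.sum_nonneg fun i _ => Real.rpow_nonneg (hf i) v) h1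
          (by positivity)
    _ = (∑ i ∈ s, f i ^ u) ^ (1 / u) := by
        rw [← Real.rpow_mul (Finset.sum_nonneg fun i _ => Real.rpow_nonneg (hf i) u)]
        congr 1
        field_simp

private lemma aux_holder {p q : ℝ} (hp : 1 < p) (hq : 1 < q) (hpq : 1 ≤ 1 / p + 1 / q)
    {ι : Type*} (s : Finset ι) (a b : ι → ℝ) (ha : ∀ i, 0 ≤ a i) (hb : ∀ i, 0 ≤ b i) :
    ∑ i ∈ s, a i * b i ≤ (∑ i ∈ s, a i ^ p) ^ (1 / p) * (∑ i ∈ s, b i ^ q) ^ (1 / q) := by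
  set q' := Real.conjExponent p with hq'def
  have hpq' : p.HolderConjugate q' := Real.HolderConjugate.conjExponent hp
  have hq'pos : 0 < q' := hpq'.symm.pos
  have hqq' : q ≤ q' := by
    have h1 : q'⁻¹ ≤ q⁻¹ := by
      have h2 := hpq'.inv_add_inv_eq_one
      rw [one_div, one_div] at hpq
      linarith
    exact (inv_le_inv₀ hq'pos (lt_trans one_pos hq)).mp h1
  calc ∑ i ∈ s, a i * b i
      ≤ (∑ i ∈ s, a i ^ p) ^ (1 / p) * (∑ i ∈ s, b i ^ q') ^ (1 / q') :=
        Real.inner_le_Lp_mul_Lq_of_nonneg s hpq' (fun i _ => ha i) (fun i _ => hb i)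
    _ ≤ (∑ i ∈ s, a i ^ p) ^ (1 / p) * (∑ i ∈ s, b i ^ q) ^ (1 / q) := by
        refine mul_le_mul_of_nonneg_left ?_ (Real.rpow_nonneg
          (Finset.sum_nonneg fun i _ => Real.rpow_nonneg (ha i) p) _)
        exact aux_lp_mono s b hb (lt_trans one_pos hq) hqq'

end AuxHolder

/-- under disjoint lower `p`/`q`-estimates with `1/p + 1/q ≥ 1`, there is `d > 0`
with `Σₙ ‖R_{Aₙ,Bₙ}(z)‖ ≤ d‖z‖` for all sequences of pairwise disjoint finite sets. -/
theorem statement5 {p q : ℝ} (hp : 1 < p) (hq : 1 < q) (hpq : 1 ≤ 1 / p + 1 / q)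
    {I J X Y Z : Type*}
    [NormedAddCommGroup X] [NormedSpace ℝ X] [CompleteSpace X]
    [NormedAddCommGroup Y] [NormedSpace ℝ Y] [CompleteSpace Y]
    [NormedAddCommGroup Z] [NormedSpace ℝ Z] [CompleteSpace Z]
    (dX : SchauderDecomp I X) (dY : SchauderDecomp J Y)
    (hpX : dX.DisjLowerEstimate p) (hqY : dY.DisjLowerEstimate q)
    (hPnorm : ∀ C : Set I, C.Nonempty → ‖dX.proj C‖ ≤ 1)
    (hQnorm : ∀ D : Set J, D.Nonempty → ‖dY.proj D‖ ≤ 1)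
    (t : X →L[ℝ] Y →L[ℝ] Z) (ht : IsProjTensorProduct t) :
    ∃ d : ℝ, 0 < d ∧ ∀ (A : ℕ → Set I) (B : ℕ → Set J),
      (∀ n, (A n).Finite) → (∀ n, (B n).Finite) →
      (Pairwise fun m n => Disjoint (A m) (A n)) →
      (Pairwise fun m n => Disjoint (B m) (B n)) →
      ∀ R : ℕ → Z →L[ℝ] Z,
        (∀ n x y, R n (t x y) = t (dX.proj (A n) x) (dY.proj (B n) y)) →
        ∀ z : Z, Summable (fun n => ‖R n z‖) ∧ ∑' n, ‖R n z‖ ≤ d * ‖z‖ := by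
  obtain ⟨hdense, hnorm, -⟩ := ht
  obtain ⟨cX, hcX, hX⟩ := hpX
  obtain ⟨cY, hcY, hY⟩ := hqY
  have hd0 : 0 < cX * cY := mul_pos hcX hcY
  refine ⟨cX * cY, hd0, ?_⟩
  intro A B hAfin hBfin hAdis hBdis R hR z
  have helem : ∀ (x : X) (y : Y), ‖t x y‖ ≤ ‖x‖ * ‖y‖ := by
    intro x y
    have hmem : t x y ∈ Submodule.span ℝ {z : Z | ∃ x y, z = t x y} :=
      Submodule.subset_span ⟨x, y, rfl⟩
    rw [hnorm _ hmem]
    apply csInf_le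
    · refine ⟨0, ?_⟩
      rintro r ⟨n, xs, ys, -, rfl⟩
      exact Finset.sum_nonneg fun i _ => mul_nonneg (norm_nonneg _) (norm_nonneg _)
    · exact ⟨1, ![x], ![y], by simp, by simp⟩
  have key : ∀ N : ℕ, ∀ w : Z, ∑ n ∈ Finset.range N, ‖R n w‖ ≤ cX * cY * ‖w‖ := by
    intro N
    have hspan : ∀ w ∈ Submodule.span ℝ {z : Z | ∃ x y, z = t x y},
        ∑ n ∈ Finset.range N, ‖R n w‖ ≤ cX * cY * ‖w‖ := by
      intro w hw
      have hSne : Set.Nonempty {r : ℝ | ∃ (n : ℕ) (x : Fin n → X) (y : Fin n → Y),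
          w = ∑ i, t (x i) (y i) ∧ r = ∑ i, ‖x i‖ * ‖y i‖} := by
        obtain ⟨m, f, g, hsum⟩ := Submodule.mem_span_set'.mp hw
        choose xs ys hxy using fun i => (g i).2
        refine ⟨∑ i, ‖f i • xs i‖ * ‖ys i‖, m, fun i => f i • xs i, ys, ?_, rfl⟩
        rw [← hsum]
        refine Finset.sum_congr rfl fun i _ => ?_
        rw [hxy i, t.map_smul]
        rfl
      have hb : ∀ r ∈ {r : ℝ | ∃ (n : ℕ) (x : Fin n → X) (y : Fin n → Y),
          w = ∑ i, t (x i) (y i) ∧ r = ∑ i, ‖x i‖ * ‖y i‖},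
          ∑ n ∈ Finset.range N, ‖R n w‖ ≤ cX * cY * r := by
        rintro r ⟨m, x, y, hw', rfl⟩
        have step1 : ∀ n, ‖R n w‖ ≤
            ∑ i, ‖dX.proj (A n) (x i)‖ * ‖dY.proj (B n) (y i)‖ := by
          intro n
          rw [hw', _root_.map_sum]
          refine (norm_sum_le _ _).trans (Finset.sum_le_sum fun i _ => ?_)
          rw [hR]
          exact helem _ _
        calc ∑ n ∈ Finset.range N, ‖R n w‖
            ≤ ∑ n ∈ Finset.range N, ∑ i, ‖dX.proj (A n) (x i)‖ * ‖dY.proj (B n) (y i)‖ :=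
              Finset.sum_le_sum fun n _ => step1 n
          _ = ∑ i, ∑ n ∈ Finset.range N, ‖dX.proj (A n) (x i)‖ * ‖dY.proj (B n) (y i)‖ :=
              Finset.sum_comm
          _ ≤ ∑ i, (cX * ‖x i‖) * (cY * ‖y i‖) := by
              refine Finset.sum_le_sum fun i _ => ?_
              refine (aux_holder hp hq hpq (Finset.range N)
                (fun n => ‖dX.proj (A n) (x i)‖) (fun n => ‖dY.proj (B n) (y i)‖)
                (fun n => norm_nonneg _) (fun n => norm_nonneg _)).trans ?_
              have hXi : (∑ n ∈ Finset.range N, ‖dX.proj (A n) (x i)‖ ^ p) ^ (1 / p)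
                  ≤ cX * ‖x i‖ := by
                have h := hX N (fun k => A (k : ℕ)) (fun k => hAfin k)
                  (fun k l hkl => hAdis fun h => hkl (Fin.val_injective h)) (x i)
                rwa [Fin.sum_univ_eq_sum_range
                  (fun n => ‖dX.proj (A n) (x i)‖ ^ p) N] at h
              have hYi : (∑ n ∈ Finset.range N, ‖dY.proj (B n) (y i)‖ ^ q) ^ (1 / q)
                  ≤ cY * ‖y i‖ := by
                have h := hY N (fun k => B (k : ℕ)) (fun k => hBfin k)
                  (fun k l hkl => hBdis fun h => hkl (Fin.val_injective h)) (y i)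
                rwa [Fin.sum_univ_eq_sum_range
                  (fun n => ‖dY.proj (B n) (y i)‖ ^ q) N] at h
              exact mul_le_mul hXi hYi
                (Real.rpow_nonneg (Finset.sum_nonneg fun n _ =>
                  Real.rpow_nonneg (norm_nonneg _) q) _) (by positivity)
          _ = cX * cY * ∑ i, ‖x i‖ * ‖y i‖ := by
              rw [Finset.mul_sum]
              exact Finset.sum_congr rfl fun i _ => by ring
      rw [hnorm _ hw]
      have h1 : (∑ n ∈ Finset.range N, ‖R n w‖) / (cX * cY) ≤
          sInf {r : ℝ | ∃ (n : ℕ) (x : Fin n → X) (y : Fin n → Y),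
            w = ∑ i, t (x i) (y i) ∧ r = ∑ i, ‖x i‖ * ‖y i‖} := by
        refine le_csInf hSne fun r hr => ?_
        rw [div_le_iff₀ hd0]
        have := hb r hr
        linarith [this]
      have h2 := (div_le_iff₀ hd0).mp h1
      linarith [h2]
    intro w
    have hcl : IsClosed {w : Z | ∑ n ∈ Finset.range N, ‖R n w‖ ≤ cX * cY * ‖w‖} := by
      apply isClosed_le
      · exact continuous_finset_sum _ fun n _ => (R n).continuous.norm
      · exact continuous_const.mul continuous_norm
    have hsub := hcl.closure_subset_iff.mpr hspan
    rw [hdense.closure_eq] at hsub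
    exact hsub (Set.mem_univ w)
  exact ⟨summable_of_sum_range_le (fun n => norm_nonneg _) (fun N => key N z),
    Real.tsum_le_of_sum_range_le (fun n => norm_nonneg _) (fun N => key N z)⟩
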